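/- arXiv:2303.15165 — 3 statements merged into one kernel-verified Lean document; each statement's English description precedes it below -/
import Mathlib

section
/- The isotropy group of 0 in the restricted Siegel disc is the unitary group U(H₊): if (g, h) is a restricted symplectic pair, then g is invertible, and the action (g,h)·Z = (gZ + h)(h̄Z + ḡ)^{−1} fixes Z = 0 (equivalently h ḡ^{−1} = 0) if and only if h = 0 and g is unitary (g g* = g* g = I). Conversely, for every unitary g on E the pair (g, 0) is a restricted symplectic pair fixing 0. -/
open Complex ComplexOrder

noncomputable section

/-- The complex Hilbert space `E = ℓ²(ℕ, ℂ)`. -/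
abbrev E : Type := lp (fun _ : ℕ => ℂ) 2

/-- The standard Hilbert basis vector `e_n` of `E`. -/
def stdVec (n : ℕ) : E := lp.single 2 n (1 : ℂ)

/-- The conjugated operator `T̄ = C ∘ T ∘ C`, where `C` is entrywise complex
conjugation on `E` (the `star` operation of `E`). -/
def opBar (T : E →L[ℂ] E) : E →L[ℂ] E :=
  LinearMap.mkContinuous
    { toFun := fun x => star (T (star x))
      map_add' := fun x y => by
        show star (T (star (x + y))) = star (T (star x)) + star (T (star y))
        rw [star_add, map_add, star_add]
      map_smul' := fun c x => by
        simp only [RingHom.id_apply, star_smul, map_smul, star_star] }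
    ‖T‖ (fun x => by
      show ‖star (T (star x))‖ ≤ ‖T‖ * ‖x‖
      rw [norm_star]
      calc ‖T (star x)‖ ≤ ‖T‖ * ‖star x‖ := T.le_opNorm _
        _ = ‖T‖ * ‖x‖ := by rw [norm_star])

/-- The transpose `Tᵀ = (T̄)*`. -/
def opTrans (T : E →L[ℂ] E) : E →L[ℂ] E :=
  ContinuousLinearMap.adjoint (opBar T)

/-- `T` is a Hilbert–Schmidt operator: `Σₙ ‖T eₙ‖² < ∞`. -/
def IsHS (T : E →L[ℂ] E) : Prop :=
  Summable fun n : ℕ => ‖T (stdVec n)‖ ^ 2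

/-- Membership in the restricted Siegel disc: `Zᵀ = Z`, `Z` Hilbert–Schmidt, and
`⟨(I − Z Z̄)u, u⟩ > 0` for all `u ≠ 0`. -/
def MemSiegelRes (Z : E →L[ℂ] E) : Prop :=
  opTrans Z = Z ∧ IsHS Z ∧
  ∀ u : E, u ≠ 0 → 0 < (inner ℂ (((1 : E →L[ℂ] E) - Z * opBar Z) u) u : ℂ)

/-- `(g, h)` is a restricted symplectic pair: `h` is Hilbert–Schmidt and the block
operator `(g h; h̄ ḡ)` is symplectic, i.e. `g g* − h h* = I`, `g hᵀ = h gᵀ`,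
`g* g − hᵀ h̄ = I`, `g* h = hᵀ ḡ`. -/
def IsRSPair (g h : E →L[ℂ] E) : Prop :=
  IsHS h ∧
  g * ContinuousLinearMap.adjoint g - h * ContinuousLinearMap.adjoint h = 1 ∧
  g * opTrans h = h * opTrans g ∧
  ContinuousLinearMap.adjoint g * g - opTrans h * opBar h = 1 ∧
  ContinuousLinearMap.adjoint g * h = opTrans h * opBar g

end

set_option maxHeartbeats 1000000 in
/-- **The isotropy group of `0` in the restricted Siegel disc is the unitary group
`U(H₊)`.**  If `(g, h)` is a restricted symplectic pair then `g` is invertible, and the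
action `(g,h)·Z = (gZ + h)(h̄Z + ḡ)⁻¹` fixes `0` (i.e. `h = 0`) iff `h = 0` and `g` is
unitary.  Conversely `(g, 0)` is a restricted symplectic pair for every unitary `g`. -/
theorem isotropy_of_zero_is_unitary :
    (∀ g h : E →L[ℂ] E, IsRSPair g h →
      (∃ gi : E →L[ℂ] E, g * gi = 1 ∧ gi * g = 1) ∧
      (h = 0 → g * ContinuousLinearMap.adjoint g = 1 ∧
        ContinuousLinearMap.adjoint g * g = 1)) ∧
    (∀ g : E →L[ℂ] E, g * ContinuousLinearMap.adjoint g = 1 →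
      ContinuousLinearMap.adjoint g * g = 1 → IsRSPair g 0) := by
  have hOpBarZero : opBar 0 = 0 := by
    refine ContinuousLinearMap.ext fun x => ?_
    show star ((0 : E →L[ℂ] E) (star x)) = 0
    simp
  have hOpTransZero : opTrans 0 = 0 := by
    rw [opTrans, hOpBarZero]
    exact map_zero (ContinuousLinearMap.adjoint : (E →L[ℂ] E) ≃ₗᵢ⋆[ℂ] (E →L[ℂ] E))
  have key : ∀ A : E →L[ℂ] E, IsUnit (1 + A * ContinuousLinearMap.adjoint A) := by
    intro A
    apply ContinuousLinearMap.isUnit_of_forall_le_norm_inner_map _ (c := 1) one_pos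
    intro x
    have h1 : (inner ℂ ((1 + A * ContinuousLinearMap.adjoint A) x) x : ℂ)
        = ((‖x‖ ^ 2 + ‖ContinuousLinearMap.adjoint A x‖ ^ 2 : ℝ) : ℂ) := by
      simp only [ContinuousLinearMap.add_apply, ContinuousLinearMap.one_apply,
        ContinuousLinearMap.mul_apply, inner_add_left]
      rw [show (A (ContinuousLinearMap.adjoint A x)) =
        ContinuousLinearMap.adjoint (ContinuousLinearMap.adjoint A)
          (ContinuousLinearMap.adjoint A x) by rw [ContinuousLinearMap.adjoint_adjoint],
        ContinuousLinearMap.adjoint_inner_left]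
      rw [inner_self_eq_norm_sq_to_K, inner_self_eq_norm_sq_to_K]
      push_cast
      norm_num
    rw [h1]
    rw [Complex.norm_real, Real.norm_eq_abs]
    have hx : (0 : ℝ) ≤ ‖x‖ ^ 2 + ‖ContinuousLinearMap.adjoint A x‖ ^ 2 := by positivity
    rw [_root_.abs_of_nonneg hx, NNReal.coe_one, mul_one]
    nlinarith [sq_nonneg ‖ContinuousLinearMap.adjoint A x‖]
  constructor
  · rintro g h ⟨hHS, h1, h2, h3, h4⟩
    have hgg : g * ContinuousLinearMap.adjoint g = 1 + h * ContinuousLinearMap.adjoint h :=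
      sub_eq_iff_eq_add.mp h1
    have hgg' : ContinuousLinearMap.adjoint g * g = 1 + opTrans h * opBar h :=
      sub_eq_iff_eq_add.mp h3
    have hBar : opBar h = ContinuousLinearMap.adjoint (opTrans h) := by
      rw [opTrans, ContinuousLinearMap.adjoint_adjoint]
    have hu1 : IsUnit (g * ContinuousLinearMap.adjoint g) := by
      rw [hgg]; exact key h
    have hu2 : IsUnit (ContinuousLinearMap.adjoint g * g) := by
      rw [hgg', hBar]; exact key (opTrans h)
    obtain ⟨u, hu⟩ := hu1
    obtain ⟨w, hw⟩ := hu2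
    refine ⟨⟨ContinuousLinearMap.adjoint g * ↑u⁻¹, ?_, ?_⟩, ?_⟩
    · rw [← mul_assoc, ← hu, Units.mul_inv]
    · -- left inverse: ↑w⁻¹ * adjoint g is a left inverse; it equals the right one
      have hl : (↑w⁻¹ * ContinuousLinearMap.adjoint g) * g = 1 := by
        rw [mul_assoc, ← hw, Units.inv_mul]
      have hr : g * (ContinuousLinearMap.adjoint g * ↑u⁻¹) = 1 := by
        rw [← mul_assoc, ← hu, Units.mul_inv]
      have : (↑w⁻¹ * ContinuousLinearMap.adjoint g : E →L[ℂ] E)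
          = ContinuousLinearMap.adjoint g * ↑u⁻¹ := by
        calc (↑w⁻¹ * ContinuousLinearMap.adjoint g : E →L[ℂ] E)
            = (↑w⁻¹ * ContinuousLinearMap.adjoint g) *
              (g * (ContinuousLinearMap.adjoint g * ↑u⁻¹)) := by rw [hr, mul_one]
          _ = ((↑w⁻¹ * ContinuousLinearMap.adjoint g) * g) *
              (ContinuousLinearMap.adjoint g * ↑u⁻¹) := by simp only [mul_assoc]
          _ = ContinuousLinearMap.adjoint g * ↑u⁻¹ := by rw [hl, one_mul]
      rw [← this, hl]
    · intro hzero
      subst hzero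
      constructor
      · rw [hgg]; simp
      · rw [hgg', hOpTransZero]; simp
  · intro g hg1 hg2
    refine ⟨?_, ?_, ?_, ?_, ?_⟩
    · unfold IsHS
      simpa using summable_zero
    · simpa using hg1
    · rw [hOpTransZero]; simp
    · rw [hOpTransZero]; simpa using hg2
    · rw [hOpTransZero]; simp
end

section
/- The restricted symplectic pairs are closed under the block-matrix product: if (g₁, h₁) and (g₂, h₂) are restricted symplectic pairs, then the pair (g, h) := (g₁ g₂ + h₁ h̄₂, g₁ h₂ + h₁ ḡ₂) is again a restricted symplectic pair; in particular g₁ h₂ + h₁ ḡ₂ is Hilbert–Schmidt and the relations g g* − h h* = I, g hᵀ = h gᵀ, g* g − hᵀ h̄ = I, g* h = hᵀ ḡ hold for (g, h). (This is the product of the block operators (g₁ h₁; h̄₁ ḡ₁) and (g₂ h₂; h̄₂ ḡ₂), so the restricted symplectic group is a group.) -/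
open Complex ComplexOrder

section Lemmas

open ContinuousLinearMap

lemma opBar_apply (T : E →L[ℂ] E) (x : E) : opBar T x = star (T (star x)) := rfl

lemma opBar_add (S T : E →L[ℂ] E) : opBar (S + T) = opBar S + opBar T := by
  ext x; simp [opBar_apply, star_add]

lemma opBar_mul (S T : E →L[ℂ] E) : opBar (S * T) = opBar S * opBar T := by
  ext x; simp [opBar_apply, ContinuousLinearMap.mul_apply, star_star]

lemma opBar_one : opBar (1 : E →L[ℂ] E) = 1 := by
  ext x; simp [opBar_apply]

lemma opBar_sub (S T : E →L[ℂ] E) : opBar (S - T) = opBar S - opBar T := by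
  ext x; simp [opBar_apply, star_sub]

lemma opBar_opBar (T : E →L[ℂ] E) : opBar (opBar T) = T := by
  ext x; simp [opBar_apply]

lemma inner_star_star (a b : E) :
    (inner ℂ (star a) (star b) : ℂ) = starRingEnd ℂ (inner ℂ a b : ℂ) := by
  rw [lp.inner_eq_tsum, lp.inner_eq_tsum, starRingEnd_apply, tsum_star]
  refine tsum_congr fun i => ?_
  simp only [lp.coeFn_star, Pi.star_apply, RCLike.inner_apply, starRingEnd_apply, star_mul',
    star_star]

lemma opBar_star (T : E →L[ℂ] E) : opBar (star T) = star (opBar T) := by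
  rw [star_eq_adjoint, star_eq_adjoint]
  rw [eq_adjoint_iff]
  intro x y
  rw [opBar_apply, opBar_apply]
  calc (inner ℂ (star (adjoint T (star x))) y : ℂ)
      = inner ℂ (star (adjoint T (star x))) (star (star y)) := by rw [star_star]
    _ = starRingEnd ℂ (inner ℂ (adjoint T (star x)) (star y)) := inner_star_star _ _
    _ = starRingEnd ℂ (inner ℂ (star x) (T (star y))) := by rw [adjoint_inner_left]
    _ = inner ℂ (star (star x)) (star (T (star y))) := (inner_star_star _ _).symm
    _ = inner ℂ x (star (T (star y))) := by rw [star_star]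

lemma opTrans_eq (T : E →L[ℂ] E) : opTrans T = star (opBar T) := by
  rw [star_eq_adjoint]; rfl

lemma star_stdVec (n : ℕ) : star (stdVec n) = stdVec n := by
  apply lp.ext
  funext i
  simp [lp.coeFn_star, stdVec, lp.single_apply, apply_ite star]
  by_cases h : i = n <;> simp [Pi.single_apply, h]

lemma coord_eq_inner (x : E) (n : ℕ) : x n = (inner ℂ (stdVec n) x : ℂ) := by
  rw [stdVec, lp.inner_single_left, RCLike.inner_apply, map_one, mul_one]

lemma norm_sq_eq_tsum (x : E) : ‖x‖ ^ 2 = ∑' m, ‖x m‖ ^ 2 := by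
  have h := lp.norm_rpow_eq_tsum (p := 2) (by norm_num) x
  rw [show ((2 : ENNReal).toReal) = ((2 : ℕ) : ℝ) by norm_num] at h
  simp only [Real.rpow_natCast] at h
  exact_mod_cast h

lemma summable_coord_sq (x : E) : Summable fun m => ‖x m‖ ^ 2 := by
  have h := (lp.memℓp x).summable (p := 2) (by norm_num)
  rw [show ((2 : ENNReal).toReal) = ((2 : ℕ) : ℝ) by norm_num] at h
  simp only [Real.rpow_natCast] at h
  exact_mod_cast h

set_option maxHeartbeats 1000000 in
lemma isHS_star {T : E →L[ℂ] E} (h : IsHS T) : IsHS (star T) := by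
  have key : ∀ m n : ℕ, ‖(star T) (stdVec m) n‖ = ‖T (stdVec n) m‖ := by
    intro m n
    rw [coord_eq_inner ((star T) (stdVec m)) n, star_eq_adjoint, adjoint_inner_right,
      coord_eq_inner (T (stdVec n)) m, ← inner_conj_symm, RCLike.norm_conj]
  have hf : Summable fun p : ℕ × ℕ => ‖T (stdVec p.1) p.2‖ ^ 2 := by
    refine (summable_prod_of_nonneg (fun p => sq_nonneg _)).2
      ⟨fun n => summable_coord_sq (T (stdVec n)), ?_⟩
    refine h.congr fun n => ?_
    rw [norm_sq_eq_tsum]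
  have hswap : Summable fun p : ℕ × ℕ => ‖T (stdVec p.2) p.1‖ ^ 2 := hf.prod_symm
  have h2 := ((summable_prod_of_nonneg (f := fun p : ℕ × ℕ => ‖T (stdVec p.2) p.1‖ ^ 2)
    (fun p => sq_nonneg _)).1 hswap).2
  refine h2.congr fun m => ?_
  rw [norm_sq_eq_tsum]
  exact tsum_congr fun n => by rw [key]

lemma isHS_mul_left (A : E →L[ℂ] E) {T : E →L[ℂ] E} (h : IsHS T) : IsHS (A * T) := by
  refine Summable.of_nonneg_of_le (fun n => sq_nonneg _) (fun n => ?_) (h.mul_left (‖A‖ ^ 2))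
  have h1 : ‖(A * T) (stdVec n)‖ ≤ ‖A‖ * ‖T (stdVec n)‖ := A.le_opNorm _
  have h2 : (0:ℝ) ≤ ‖(A * T) (stdVec n)‖ := norm_nonneg _
  nlinarith [norm_nonneg (T (stdVec n)), norm_nonneg A]

lemma isHS_mul_right {T : E →L[ℂ] E} (A : E →L[ℂ] E) (h : IsHS T) : IsHS (T * A) := by
  have : T * A = star (star A * star T) := by simp [star_mul]
  rw [this]
  exact isHS_star (isHS_mul_left (star A) (isHS_star h))

lemma isHS_add {S T : E →L[ℂ] E} (hS : IsHS S) (hT : IsHS T) : IsHS (S + T) := by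
  refine Summable.of_nonneg_of_le (fun n => sq_nonneg _) (fun n => ?_)
    (((hS.add hT).mul_left 2))
  have h1 : ‖(S + T) (stdVec n)‖ ≤ ‖S (stdVec n)‖ + ‖T (stdVec n)‖ := by
    have := norm_add_le (S (stdVec n)) (T (stdVec n))
    simpa using this
  nlinarith [norm_nonneg ((S + T) (stdVec n)), norm_nonneg (S (stdVec n)),
    norm_nonneg (T (stdVec n)), sq_nonneg (‖S (stdVec n)‖ - ‖T (stdVec n)‖)]

lemma isHS_opBar {T : E →L[ℂ] E} (h : IsHS T) : IsHS (opBar T) := by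
  refine h.congr fun n => ?_
  rw [opBar_apply, star_stdVec, norm_star]

end Lemmas


set_option maxHeartbeats 1000000 in
/-- **Restricted symplectic pairs are closed under the block-matrix product.**
If `(g₁, h₁)` and `(g₂, h₂)` are restricted symplectic pairs then so is
`(g₁ g₂ + h₁ h̄₂, g₁ h₂ + h₁ ḡ₂)`; in particular `g₁ h₂ + h₁ ḡ₂` is Hilbert–Schmidt.
(This is the product of the block operators, so `Sp_res` is a group.) -/
theorem restricted_symplectic_group_closed_under_product
    (g₁ h₁ g₂ h₂ : E →L[ℂ] E) (h1 : IsRSPair g₁ h₁) (h2 : IsRSPair g₂ h₂) :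
    IsRSPair (g₁ * g₂ + h₁ * opBar h₂) (g₁ * h₂ + h₁ * opBar g₂) := by
  obtain ⟨hs1, a1, b1, c1, d1⟩ := h1
  obtain ⟨hs2, a2, b2, c2, d2⟩ := h2
  simp only [opTrans_eq, ← ContinuousLinearMap.star_eq_adjoint] at a1 b1 c1 d1 a2 b2 c2 d2
  have ab2 := congrArg opBar a2
  have bb2 := congrArg opBar b2
  have cb1 := congrArg opBar c1
  have db1 := congrArg opBar d1
  simp only [opBar_sub, opBar_mul, opBar_star, opBar_opBar, opBar_one] at ab2 bb2 cb1 db1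
  refine ⟨?_, ?_, ?_, ?_, ?_⟩
  · exact isHS_add (isHS_mul_left g₁ hs2) (isHS_mul_right (opBar g₂) hs1)
  · simp only [opTrans_eq, ← ContinuousLinearMap.star_eq_adjoint, opBar_add, opBar_mul,
      opBar_opBar, star_add, star_mul]
    calc (g₁ * g₂ + h₁ * opBar h₂) * (star g₂ * star g₁ + star (opBar h₂) * star h₁)
          - (g₁ * h₂ + h₁ * opBar g₂) * (star h₂ * star g₁ + star (opBar g₂) * star h₁)
        = g₁ * (g₂ * star g₂ - h₂ * star h₂) * star g₁
          + g₁ * (g₂ * star (opBar h₂) - h₂ * star (opBar g₂)) * star h₁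
          + h₁ * (opBar h₂ * star g₂ - opBar g₂ * star h₂) * star g₁
          + h₁ * (opBar h₂ * star (opBar h₂) - opBar g₂ * star (opBar g₂)) * star h₁ := by
            noncomm_ring
      _ = g₁ * star g₁ - h₁ * star h₁ := by
            rw [a2, sub_eq_zero_of_eq b2, sub_eq_zero_of_eq bb2.symm,
              show opBar h₂ * star (opBar h₂) - opBar g₂ * star (opBar g₂) = -1 by
                rw [← neg_sub, ab2]]
            noncomm_ring
      _ = 1 := a1
  · simp only [opTrans_eq, ← ContinuousLinearMap.star_eq_adjoint, opBar_add, opBar_mul,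
      opBar_opBar, star_add, star_mul]
    rw [← sub_eq_zero]
    calc (g₁ * g₂ + h₁ * opBar h₂) * (star (opBar h₂) * star (opBar g₁)
            + star g₂ * star (opBar h₁))
          - (g₁ * h₂ + h₁ * opBar g₂) * (star (opBar g₂) * star (opBar g₁)
            + star h₂ * star (opBar h₁))
        = g₁ * (g₂ * star (opBar h₂) - h₂ * star (opBar g₂)) * star (opBar g₁)
          + g₁ * (g₂ * star g₂ - h₂ * star h₂) * star (opBar h₁)
          + h₁ * (opBar h₂ * star (opBar h₂) - opBar g₂ * star (opBar g₂)) * star (opBar g₁)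
          + h₁ * (opBar h₂ * star g₂ - opBar g₂ * star h₂) * star (opBar h₁) := by
            noncomm_ring
      _ = g₁ * star (opBar h₁) - h₁ * star (opBar g₁) := by
            rw [a2, sub_eq_zero_of_eq b2, sub_eq_zero_of_eq bb2.symm,
              show opBar h₂ * star (opBar h₂) - opBar g₂ * star (opBar g₂) = -1 by
                rw [← neg_sub, ab2]]
            noncomm_ring
      _ = 0 := sub_eq_zero_of_eq b1
  · simp only [opTrans_eq, ← ContinuousLinearMap.star_eq_adjoint, opBar_add, opBar_mul,
      opBar_opBar, star_add, star_mul]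
    calc (star g₂ * star g₁ + star (opBar h₂) * star h₁) * (g₁ * g₂ + h₁ * opBar h₂)
          - (star (opBar h₂) * star (opBar g₁) + star g₂ * star (opBar h₁))
            * (opBar g₁ * opBar h₂ + opBar h₁ * g₂)
        = star g₂ * (star g₁ * g₁ - star (opBar h₁) * opBar h₁) * g₂
          + star g₂ * (star g₁ * h₁ - star (opBar h₁) * opBar g₁) * opBar h₂
          + star (opBar h₂) * (star h₁ * g₁ - star (opBar g₁) * opBar h₁) * g₂
          + star (opBar h₂) * (star h₁ * h₁ - star (opBar g₁) * opBar g₁) * opBar h₂ := by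
            noncomm_ring
      _ = star g₂ * g₂ - star (opBar h₂) * opBar h₂ := by
            rw [c1, sub_eq_zero_of_eq d1, sub_eq_zero_of_eq db1.symm,
              show star h₁ * h₁ - star (opBar g₁) * opBar g₁ = -1 by rw [← neg_sub, cb1]]
            noncomm_ring
      _ = 1 := c2
  · simp only [opTrans_eq, ← ContinuousLinearMap.star_eq_adjoint, opBar_add, opBar_mul,
      opBar_opBar, star_add, star_mul]
    rw [← sub_eq_zero]
    calc (star g₂ * star g₁ + star (opBar h₂) * star h₁) * (g₁ * h₂ + h₁ * opBar g₂)
          - (star (opBar h₂) * star (opBar g₁) + star g₂ * star (opBar h₁))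
            * (opBar g₁ * opBar g₂ + opBar h₁ * h₂)
        = star g₂ * (star g₁ * g₁ - star (opBar h₁) * opBar h₁) * h₂
          + star g₂ * (star g₁ * h₁ - star (opBar h₁) * opBar g₁) * opBar g₂
          + star (opBar h₂) * (star h₁ * g₁ - star (opBar g₁) * opBar h₁) * h₂
          + star (opBar h₂) * (star h₁ * h₁ - star (opBar g₁) * opBar g₁) * opBar g₂ := by
            noncomm_ring
      _ = star g₂ * h₂ - star (opBar h₂) * opBar g₂ := by
            rw [c1, sub_eq_zero_of_eq d1, sub_eq_zero_of_eq db1.symm,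
              show star h₁ * h₁ - star (opBar g₁) * opBar g₁ = -1 by rw [← neg_sub, cb1]]
            noncomm_ring
      _ = 0 := sub_eq_zero_of_eq d2
end

section
/- Square-integrable harmonic Beltrami differentials on the disc are bounded (Ω₂(𝔻) ⊆ Ω_∞(𝔻)): there is a constant c > 0 such that for every holomorphic function φ on the open unit disc 𝔻, if the harmonic Beltrami differential μ(z) = (1 − |z|²)² conj(φ(z)) satisfies ‖μ‖₂² := ∫∫_𝔻 |μ(z)|² ρ(z) d²z < ∞, where ρ(z) d²z = 4(1 − |z|²)^{−2} d²z is the hyperbolic area element, then sup_{z∈𝔻} |μ(z)| = sup_{z∈𝔻} (1 − |z|²)² |φ(z)| ≤ c ‖μ‖₂. -/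
open Complex Metric MeasureTheory
open Set Real

lemma aux_cs (h : ℝ → ℝ) (hc : Continuous h) (T : ℝ) (hT : 0 < T) :
    (∫ x in Set.Ioc 0 T, h x) ^ 2 ≤ T * ∫ x in Set.Ioc 0 T, (h x) ^ 2 := by
  set A := ∫ x in Set.Ioc 0 T, h x with hA
  have hih : IntegrableOn h (Set.Ioc 0 T) := hc.integrableOn_Ioc
  have hih2 : IntegrableOn (fun x => (h x) ^ 2) (Set.Ioc 0 T) := (hc.pow 2).integrableOn_Ioc
  have key : 0 ≤ ∫ x in Set.Ioc 0 T, (T * h x - A) ^ 2 :=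
    setIntegral_nonneg measurableSet_Ioc (fun x _ => sq_nonneg _)
  have expand : ∫ x in Set.Ioc 0 T, (T * h x - A) ^ 2
      = T ^ 2 * (∫ x in Set.Ioc 0 T, (h x) ^ 2) - 2 * T * A * A + A ^ 2 * T := by
    have : ∀ x, (T * h x - A) ^ 2 = T ^ 2 * (h x) ^ 2 - (2 * T * A) * h x + A ^ 2 := by
      intro x; ring
    simp_rw [this]
    rw [integral_add, integral_sub]
    · have hconst : ∫ _x in Set.Ioc 0 T, A ^ 2 = A ^ 2 * T := by
        simp [Real.volume_Ioc, hT.le, mul_comm]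
      rw [integral_const_mul, integral_const_mul, hconst, ← hA]
    · exact hih2.const_mul _
    · exact hih.const_mul _
    · exact (hih2.const_mul _).sub (hih.const_mul _)
    · exact integrableOn_const (by simp [Real.volume_Ioc])
  nlinarith [key, expand, sq_nonneg A, hT]


lemma aux_mean (φ : ℂ → ℂ) (c : ℂ) (s : ℝ) (hs : 0 < s)
    (h : DiffContOnCl ℂ φ (ball c s)) :
    2 * π * ‖φ c‖ ^ 2 ≤ ∫ θ in Set.Ioc 0 (2 * π), ‖φ (circleMap c s θ)‖ ^ 2 := by
  have hcau := h.circleIntegral_sub_inv_smul (mem_ball_self hs)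
  have h1 : (∮ z in C(c, s), (z - c)⁻¹ • φ z)
      = ∫ θ in (0:ℝ)..(2 * π), I * φ (circleMap c s θ) := by
    rw [circleIntegral]
    apply intervalIntegral.integral_congr; intro θ _
    have hnz : circleMap 0 s θ ≠ 0 := circleMap_ne_center hs.ne'
    simp only [deriv_circleMap, circleMap_sub_center, smul_eq_mul]
    field_simp
  have h2 : (∫ θ in (0:ℝ)..(2 * π), φ (circleMap c s θ)) = ((2 * π : ℝ) : ℂ) * φ c := by
    have := hcau
    rw [h1, intervalIntegral.integral_const_mul] at this
    have h3 : (2 * ↑π * I : ℂ) • φ c = I * (((2 * π : ℝ) : ℂ) * φ c) := by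
      simp [smul_eq_mul]; ring
    rw [h3] at this
    exact mul_left_cancel₀ I_ne_zero this
  have hcont : Continuous fun θ => ‖φ (circleMap c s θ)‖ := by
    have hmap : ∀ θ, circleMap c s θ ∈ closure (ball c s) := by
      intro θ
      rw [closure_ball c hs.ne']
      exact sphere_subset_closedBall (circleMap_mem_sphere c hs.le θ)
    exact (h.continuousOn.comp_continuous (continuous_circleMap c s) hmap).norm
  have h4 : 2 * π * ‖φ c‖ ≤ ∫ θ in Set.Ioc 0 (2 * π), ‖φ (circleMap c s θ)‖ := by
    have := intervalIntegral.norm_integral_le_integral_norm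
      (f := fun θ => φ (circleMap c s θ)) (μ := volume) (a := 0) (b := 2 * π) two_pi_pos.le
    rw [h2] at this
    rw [intervalIntegral.integral_of_le two_pi_pos.le] at this
    calc 2 * π * ‖φ c‖ = ‖((2 * π : ℝ) : ℂ) * φ c‖ := by
          rw [norm_mul, Complex.norm_real, Real.norm_eq_abs,
            abs_of_pos two_pi_pos]
      _ ≤ _ := this
  have h5 := aux_cs (fun θ => ‖φ (circleMap c s θ)‖) hcont (2 * π) two_pi_pos
  have h6 : (2 * π * ‖φ c‖) ^ 2 ≤ (∫ θ in Set.Ioc 0 (2 * π), ‖φ (circleMap c s θ)‖) ^ 2 := by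
    apply pow_le_pow_left₀ (by positivity) h4
  nlinarith [Real.pi_pos, h5, h6]


lemma aux_area (φ : ℂ → ℂ) (c : ℂ) (r : ℝ) (hr : 0 < r)
    (hφ : DifferentiableOn ℂ φ (ball 0 1)) (hsub : closedBall c r ⊆ ball (0:ℂ) 1) :
    π * r ^ 2 * ‖φ c‖ ^ 2 ≤ ∫ z in ball c r, ‖φ z‖ ^ 2 := by
  set e : ℝ × ℝ → ℂ := fun p => p.1 * (Real.cos p.2 + Real.sin p.2 * I) with he_def
  have he : ∀ p : ℝ × ℝ, Complex.polarCoord.symm p = e p := fun p =>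
    Complex.polarCoord_symm_apply p
  have habs : ∀ p : ℝ × ℝ, ‖e p‖ = |p.1| := by
    intro p; rw [← he]; exact Complex.norm_polarCoord_symm p
  have hecont : Continuous e := by rw [he_def]; fun_prop
  have hce : ∀ s θ : ℝ, c + e (s, θ) = circleMap c s θ := by
    intro s θ
    simp only [circleMap, Complex.exp_mul_I, he_def]
    push_cast
    ring
  set U : Set (ℝ × ℝ) := Ioo (0:ℝ) r ×ˢ Ioo (-π) π with hU_def
  have hUmeas : MeasurableSet U := (measurableSet_Ioo.prod measurableSet_Ioo)
  set F : ℝ × ℝ → ℝ := fun p => p.1 * ‖φ (c + e p)‖ ^ 2 with hF_def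
  set q : ℂ → ℝ := (ball (0:ℂ) r).indicator (fun w => ‖φ (c + w)‖ ^ 2) with hq_def
  -- Step A
  have stepA : ∫ z in ball c r, ‖φ z‖ ^ 2 = ∫ p in U, F p := by
    have e1 : ∫ z in ball c r, ‖φ z‖ ^ 2 = ∫ w, q w := by
      rw [← integral_indicator measurableSet_ball]
      rw [← integral_add_left_eq_self (fun z => (ball c r).indicator
        (fun z => ‖φ z‖ ^ 2) z) c]
      congr 1; funext w
      rw [hq_def]
      have hmem : c + w ∈ ball c r ↔ w ∈ ball (0:ℂ) r := by
        simp [Metric.mem_ball, dist_eq_norm]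
      by_cases hw : w ∈ ball (0:ℂ) r
      · rw [Set.indicator_of_mem (hmem.2 hw), Set.indicator_of_mem hw]
      · rw [Set.indicator_of_notMem (fun h => hw (hmem.1 h)), Set.indicator_of_notMem hw]
    have e2 : ∫ w, q w = ∫ p in polarCoord.target, p.1 • q (Complex.polarCoord.symm p) :=
      (Complex.integral_comp_polarCoord_symm q).symm
    have e3 : ∀ p ∈ polarCoord.target,
        p.1 • q (Complex.polarCoord.symm p) = U.indicator F p := by
      rintro ⟨s, θ⟩ hp
      rw [polarCoord_target] at hp
      obtain ⟨hs, hθ⟩ := hp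
      simp only [Set.mem_Ioi] at hs
      have habs' : ‖Complex.polarCoord.symm (s, θ)‖ = s := by
        rw [he, habs, abs_of_pos hs]
      by_cases hsr : s < r
      · have hmem : Complex.polarCoord.symm (s, θ) ∈ ball (0:ℂ) r := by
          rw [mem_ball_zero_iff, habs']
          exact hsr
        have hmemU : (s, θ) ∈ U := ⟨⟨hs, hsr⟩, hθ⟩
        rw [hq_def, Set.indicator_of_mem hmem, Set.indicator_of_mem hmemU, he, hF_def,
          smul_eq_mul]
      · have hmem : Complex.polarCoord.symm (s, θ) ∉ ball (0:ℂ) r := by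
          rw [mem_ball_zero_iff, habs']
          exact fun hcon => hsr hcon
        have hmemU : (s, θ) ∉ U := fun h => hsr h.1.2
        rw [hq_def, Set.indicator_of_notMem hmem, Set.indicator_of_notMem hmemU, smul_zero]
    have e4 : ∫ p in polarCoord.target, p.1 • q (Complex.polarCoord.symm p)
        = ∫ p in U, F p := by
      rw [setIntegral_congr_fun polarCoord.open_target.measurableSet e3,
        setIntegral_indicator hUmeas,
        Set.inter_eq_self_of_subset_right ?_]
      rw [polarCoord_target, hU_def]
      exact Set.prod_mono Ioo_subset_Ioi_self subset_rfl
    rw [e1, e2, e4]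
  -- Step B: integrability of F on U
  have hK : IsCompact (Icc (0:ℝ) r ×ˢ Icc (-π) π) := isCompact_Icc.prod isCompact_Icc
  have hmaps : ∀ p ∈ Icc (0:ℝ) r ×ˢ Icc (-π) π, c + e p ∈ ball (0:ℂ) 1 := by
    rintro ⟨s, θ⟩ ⟨hs, hθ⟩
    apply hsub
    rw [mem_closedBall, dist_eq_norm, add_sub_cancel_left, habs]
    rw [_root_.abs_of_nonneg hs.1]
    exact hs.2
  have hFcont : ContinuousOn F (Icc (0:ℝ) r ×ˢ Icc (-π) π) := by
    apply ContinuousOn.mul continuous_fst.continuousOn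
    apply ContinuousOn.pow
    apply ContinuousOn.norm
    exact hφ.continuousOn.comp ((continuous_const.add hecont).continuousOn) hmaps
  have hFint : IntegrableOn F U := by
    apply (hFcont.integrableOn_compact hK).mono_set
    exact Set.prod_mono Ioo_subset_Icc_self Ioo_subset_Icc_self
  -- Step C: Fubini
  have volprod : (volume : Measure (ℝ × ℝ)).restrict U
      = (volume.restrict (Ioo (0:ℝ) r)).prod (volume.restrict (Ioo (-π) π)) := by
    rw [Measure.prod_restrict, ← Measure.volume_eq_prod]
  have hFint' : Integrable F
      ((volume.restrict (Ioo (0:ℝ) r)).prod (volume.restrict (Ioo (-π) π))) := by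
    rwa [← volprod]
  have stepC : ∫ p in U, F p
      = ∫ s in Ioo (0:ℝ) r, ∫ θ in Ioo (-π) π, F (s, θ) := by
    rw [show (∫ p in U, F p) = ∫ p, F p
      ∂((volume.restrict (Ioo (0:ℝ) r)).prod (volume.restrict (Ioo (-π) π))) from by
        rw [← volprod]]
    exact MeasureTheory.integral_prod F hFint'
  -- Step D: lower bound for the inner integral
  have stepD : ∀ s ∈ Ioo (0:ℝ) r,
      2 * π * ‖φ c‖ ^ 2 * s ≤ ∫ θ in Ioo (-π) π, F (s, θ) := by
    intro s hs
    have hdc : DiffContOnCl ℂ φ (ball c s) :=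
      hφ.diffContOnCl_ball ((closedBall_subset_closedBall hs.2.le).trans hsub)
    have hmean := aux_mean φ c s hs.1 hdc
    have hper : Function.Periodic (fun θ : ℝ => ‖φ (circleMap c s θ)‖ ^ 2) (2 * π) := by
      intro θ
      simp [(periodic_circleMap c s) θ]
    have hsh : ∫ θ in Ioo (-π) π, F (s, θ)
        = s * ∫ θ in Ioo (-π) π, ‖φ (circleMap c s θ)‖ ^ 2 := by
      rw [← MeasureTheory.integral_const_mul]
      apply setIntegral_congr_fun measurableSet_Ioo
      intro θ _
      rw [hF_def]
      simp only [hce s θ]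
    have hval : ∫ θ in Ioo (-π) π, ‖φ (circleMap c s θ)‖ ^ 2
        = ∫ θ in Ioc (0:ℝ) (2 * π), ‖φ (circleMap c s θ)‖ ^ 2 := by
      rw [← integral_Ioc_eq_integral_Ioo,
        ← intervalIntegral.integral_of_le (by linarith [pi_pos] : -π ≤ π),
        ← intervalIntegral.integral_of_le (by linarith [pi_pos] : (0:ℝ) ≤ 2 * π)]
      have := hper.intervalIntegral_add_eq (-π) 0
      rw [show -π + 2 * π = π from by ring, zero_add] at this
      exact this
    rw [hsh, hval]
    calc 2 * π * ‖φ c‖ ^ 2 * s = s * (2 * π * ‖φ c‖ ^ 2) := by ring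
      _ ≤ s * ∫ θ in Ioc (0:ℝ) (2 * π), ‖φ (circleMap c s θ)‖ ^ 2 :=
        mul_le_mul_of_nonneg_left hmean hs.1.le
  -- Step E: integrate
  have hinner_int : IntegrableOn (fun s => ∫ θ in Ioo (-π) π, F (s, θ)) (Ioo (0:ℝ) r) := by
    have := hFint'.integral_prod_left
    rwa [IntegrableOn]
  have hlin_int : IntegrableOn (fun s => 2 * π * ‖φ c‖ ^ 2 * s) (Ioo (0:ℝ) r) := by
    apply (((continuous_const.mul continuous_id).continuousOn.integrableOn_compact isCompact_Icc)).mono_set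
      Ioo_subset_Icc_self
  have stepE : ∫ s in Ioo (0:ℝ) r, 2 * π * ‖φ c‖ ^ 2 * s
      ≤ ∫ s in Ioo (0:ℝ) r, ∫ θ in Ioo (-π) π, F (s, θ) :=
    setIntegral_mono_on hlin_int hinner_int measurableSet_Ioo stepD
  have hcomp : ∫ s in Ioo (0:ℝ) r, 2 * π * ‖φ c‖ ^ 2 * s = π * r ^ 2 * ‖φ c‖ ^ 2 := by
    rw [MeasureTheory.integral_const_mul]
    have : ∫ s in Ioo (0:ℝ) r, s = r ^ 2 / 2 := by
      rw [← integral_Ioc_eq_integral_Ioo, ← intervalIntegral.integral_of_le hr.le,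
        integral_id]
      ring
    rw [this]
    ring
  rw [stepA, stepC, ← hcomp]
  exact stepE


/-- **Square-integrable harmonic Beltrami differentials on the disc are bounded**
(`Ω₂(𝔻) ⊆ Ω_∞(𝔻)`): there is a constant `c > 0` such that for every holomorphic `φ` on
the unit disc, if the harmonic Beltrami differential `μ(z) = (1 − |z|²)² conj(φ(z))` has
finite hyperbolic `L²`-norm `‖μ‖₂² = ∫∫_𝔻 |μ|² · 4(1 − |z|²)⁻² d²z < ∞`, then
`sup_{z∈𝔻} |μ(z)| = sup_{z∈𝔻} (1 − |z|²)² |φ(z)| ≤ c ‖μ‖₂`. -/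
theorem l2_harmonic_beltrami_is_bounded :
    ∃ c : ℝ, 0 < c ∧
      ∀ φ : ℂ → ℂ, DifferentiableOn ℂ φ (Metric.ball (0 : ℂ) 1) →
        ∀ μ : ℂ → ℂ,
          (∀ z : ℂ, μ z = ((1 : ℝ) - ‖z‖ ^ 2) ^ 2 * (starRingEnd ℂ) (φ z)) →
          MeasureTheory.IntegrableOn
            (fun z : ℂ => ‖μ z‖ ^ 2 * (4 / ((1 : ℝ) - ‖z‖ ^ 2) ^ 2))
            (Metric.ball (0 : ℂ) 1) →
          ∀ z ∈ Metric.ball (0 : ℂ) 1,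
            ‖μ z‖ ≤ c * Real.sqrt
              (∫ z in Metric.ball (0 : ℂ) 1,
                ‖μ z‖ ^ 2 * (4 / ((1 : ℝ) - ‖z‖ ^ 2) ^ 2)) := by
  refine ⟨8, by norm_num, ?_⟩
  intro φ hφ μ hμ hint z₀ hz₀
  set g : ℂ → ℝ := fun z => ‖μ z‖ ^ 2 * (4 / ((1 : ℝ) - ‖z‖ ^ 2) ^ 2) with hg_def
  set I := ∫ z in ball (0:ℂ) 1, g z with hI_def
  set a := ‖z₀‖ with ha_def
  have ha0 : 0 ≤ a := norm_nonneg _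
  have ha1 : a < 1 := mem_ball_zero_iff.1 hz₀
  set r : ℝ := (1 - a) / 2 with hr_def
  have hr : 0 < r := by rw [hr_def]; linarith
  have hsub : closedBall z₀ r ⊆ ball (0:ℂ) 1 := by
    intro w hw
    rw [mem_closedBall, dist_eq_norm] at hw
    rw [mem_ball_zero_iff]
    calc ‖w‖ = ‖w - z₀ + z₀‖ := by ring_nf
      _ ≤ ‖w - z₀‖ + ‖z₀‖ := norm_add_le _ _
      _ ≤ r + a := by rw [← ha_def]; linarith
      _ < 1 := by rw [hr_def]; linarith
  -- norms of μ
  have hnorm : ∀ z : ℂ, ‖μ z‖ = (1 - ‖z‖ ^ 2) ^ 2 * ‖φ z‖ := by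
    intro z
    rw [hμ z, norm_mul, RCLike.norm_conj]
    congr 1
    rw [show ((1:ℝ):ℂ) - (‖z‖:ℂ) ^ 2 = (((1 - ‖z‖ ^ 2 : ℝ)):ℂ) from by push_cast; ring,
      norm_pow, Complex.norm_real, Real.norm_eq_abs, _root_.sq_abs]
  -- key geometric facts on ball z₀ r
  have hball : ∀ w ∈ ball z₀ r, r ≤ 1 - ‖w‖ ^ 2 := by
    intro w hw
    have h1 : ‖w‖ ≤ a + r := by
      have := (mem_closedBall.1 (ball_subset_closedBall hw))
      rw [dist_eq_norm] at this
      calc ‖w‖ = ‖w - z₀ + z₀‖ := by ring_nf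
        _ ≤ ‖w - z₀‖ + ‖z₀‖ := norm_add_le _ _
        _ ≤ r + a := by linarith
        _ = a + r := by ring
    have h2 : ‖w‖ < 1 := mem_ball_zero_iff.1 (hsub (ball_subset_closedBall hw))
    have h3 : 1 - ‖w‖ ≥ r := by rw [hr_def] at *; linarith
    nlinarith [norm_nonneg w]
  -- area lemma
  have harea := aux_area φ z₀ r hr hφ hsub
  -- integrability of |φ|² on ball z₀ r
  have hφc : ContinuousOn (fun w => ‖φ w‖ ^ 2) (closedBall z₀ r) :=
    ((hφ.continuousOn.mono hsub).norm.pow 2)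
  have hφint : IntegrableOn (fun w => ‖φ w‖ ^ 2) (ball z₀ r) :=
    (hφc.integrableOn_compact (isCompact_closedBall _ _)).mono_set ball_subset_closedBall
  -- g expressed on the ball
  have hgball : ∀ w ∈ ball (0:ℂ) 1, g w = 4 * (1 - ‖w‖ ^ 2) ^ 2 * ‖φ w‖ ^ 2 := by
    intro w hw
    have h1 : ‖w‖ < 1 := mem_ball_zero_iff.1 hw
    have h2 : (1 : ℝ) - ‖w‖ ^ 2 ≠ 0 := by nlinarith [norm_nonneg w]
    simp only [hg_def]
    rw [hnorm w]
    set t := (1:ℝ) - ‖w‖ ^ 2 with ht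
    field_simp
  -- I ≥ ∫ over small ball of g
  have h0g : ∀ w, 0 ≤ g w := by
    intro w
    apply mul_nonneg (sq_nonneg _)
    positivity
  have hmono : ∫ w in ball z₀ r, g w ≤ I := by
    rw [hI_def]
    apply setIntegral_mono_set hint
    · exact Filter.Eventually.of_forall h0g
    · exact HasSubset.Subset.eventuallyLE (fun w hw => hsub (ball_subset_closedBall hw))
  -- rewrite integral over small ball
  have hgsmall : ∫ w in ball z₀ r, g w
      = ∫ w in ball z₀ r, 4 * (1 - ‖w‖ ^ 2) ^ 2 * ‖φ w‖ ^ 2 := by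
    apply setIntegral_congr_fun measurableSet_ball
    intro w hw
    exact hgball w (hsub (ball_subset_closedBall hw))
  have hgint : IntegrableOn (fun w => 4 * (1 - ‖w‖ ^ 2) ^ 2 * ‖φ w‖ ^ 2) (ball z₀ r) := by
    apply (ContinuousOn.integrableOn_compact (isCompact_closedBall z₀ r) ?_).mono_set
      ball_subset_closedBall
    apply ContinuousOn.mul ?_ (hφc.mono subset_rfl)
    fun_prop
  have hlow : ∫ w in ball z₀ r, 4 * r ^ 2 * ‖φ w‖ ^ 2 ≤ ∫ w in ball z₀ r, g w := by
    rw [hgsmall]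
    apply setIntegral_mono_on (hφint.const_mul _) hgint measurableSet_ball
    intro w hw
    have h := hball w hw
    have h4 : r ^ 2 ≤ (1 - ‖w‖ ^ 2) ^ 2 := pow_le_pow_left₀ hr.le h 2
    nlinarith [mul_le_mul_of_nonneg_right h4 (sq_nonneg (‖φ w‖))]
  have hlow2 : 4 * r ^ 2 * (π * r ^ 2 * ‖φ z₀‖ ^ 2) ≤ ∫ w in ball z₀ r, g w := by
    calc 4 * r ^ 2 * (π * r ^ 2 * ‖φ z₀‖ ^ 2)
        ≤ 4 * r ^ 2 * ∫ w in ball z₀ r, ‖φ w‖ ^ 2 := by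
          apply mul_le_mul_of_nonneg_left harea (by positivity)
      _ = ∫ w in ball z₀ r, 4 * r ^ 2 * ‖φ w‖ ^ 2 := (MeasureTheory.integral_const_mul _ _).symm
      _ ≤ _ := hlow
  have hI : 4 * π * r ^ 4 * ‖φ z₀‖ ^ 2 ≤ I := by
    calc 4 * π * r ^ 4 * ‖φ z₀‖ ^ 2 = 4 * r ^ 2 * (π * r ^ 2 * ‖φ z₀‖ ^ 2) := by ring
      _ ≤ ∫ w in ball z₀ r, g w := hlow2
      _ ≤ I := hmono
  have hInn : 0 ≤ I := by
    rw [hI_def]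
    exact setIntegral_nonneg measurableSet_ball (fun w _ => h0g w)
  -- bound ‖μ z₀‖²
  have hμsq : ‖μ z₀‖ ^ 2 ≤ 256 * r ^ 4 * ‖φ z₀‖ ^ 2 := by
    rw [hnorm z₀, ← ha_def]
    have h1 : (1 - a ^ 2) ≤ 4 * r := by rw [hr_def]; nlinarith
    have h2 : 0 ≤ 1 - a ^ 2 := by nlinarith
    have h3 : (1 - a ^ 2) ^ 2 ≤ (4 * r) ^ 2 := by nlinarith
    have h4 : ((1 - a ^ 2) ^ 2) ^ 2 ≤ ((4 * r) ^ 2) ^ 2 :=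
      pow_le_pow_left₀ (sq_nonneg _) h3 2
    nlinarith [mul_le_mul_of_nonneg_right h4 (sq_nonneg (‖φ z₀‖))]
  have hfinal : ‖μ z₀‖ ^ 2 ≤ 64 * I := by
    have hpi : 3 ≤ π := by linarith [Real.pi_gt_three]
    have hr4N : 0 ≤ r ^ 4 * ‖φ z₀‖ ^ 2 :=
      mul_nonneg (pow_pos hr 4).le (sq_nonneg _)
    have h5 : 4 * (r ^ 4 * ‖φ z₀‖ ^ 2) ≤ I := by nlinarith [hI, hpi, hr4N]
    linarith [hμsq, h5]
  calc ‖μ z₀‖ = Real.sqrt (‖μ z₀‖ ^ 2) := (Real.sqrt_sq (norm_nonneg _)).symm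
    _ ≤ Real.sqrt (64 * I) := Real.sqrt_le_sqrt hfinal
    _ = 8 * Real.sqrt I := by
        rw [Real.sqrt_mul (by norm_num : (0:ℝ) ≤ 64), show (64:ℝ) = 8 ^ 2 by norm_num,
          Real.sqrt_sq (by norm_num : (0:ℝ) ≤ 8)]
    _ = 8 * Real.sqrt I := rfl
end
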